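/- For every z ∈ ℂ with z ∉ (−∞,0] ∪ [1,∞), the integral of log(1−t)/t + log t/(1−t) along the segment from 0 to z satisfies ∫_{u=0}^{1} (Complex.log (1 − u*z)/u + z * Complex.log (u*z)/(1 − u*z)) du = −2 * Li₂(z) − Complex.log z * Complex.log (1−z). Equivalently, the Rogers dilogarithm ℛ(z) := −(1/2) ∫₀^z (log(1−t)/t + log t/(1−t)) dt equals Li₂(z) + (1/2) * Complex.log z * Complex.log (1−z). -/

import Mathlib

open Set MeasureTheory Filter Topology

noncomputable section

lemma intervalIntegrable_reallog01 : IntervalIntegrable Real.log volume 0 1 := by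
  have hcont : ContinuousOn (fun x : ℝ => x - x * Real.log x) (Icc 0 1) :=
    (continuous_id.sub Real.continuous_mul_log).continuousOn
  have hderiv : ∀ x ∈ Ioo (0:ℝ) 1,
      HasDerivAt (fun x : ℝ => x - x * Real.log x) (-Real.log x) x := by
    intro x hx
    have h1 : HasDerivAt (fun x : ℝ => x * Real.log x) (Real.log x + 1) x := by
      have := (hasDerivAt_id x).mul (Real.hasDerivAt_log (ne_of_gt hx.1))
      refine this.congr_deriv ?_
      simp [ne_of_gt hx.1]
    have := (hasDerivAt_id x).sub h1
    refine this.congr_deriv ?_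
    ring
  have h := intervalIntegral.integrableOn_deriv_of_nonneg hcont hderiv
    (fun x hx => neg_nonneg.2 (Real.log_nonpos hx.1.le hx.2.le))
  have : IntervalIntegrable (fun x : ℝ => -Real.log x) volume 0 1 := by
    rw [intervalIntegrable_iff_integrableOn_Ioc_of_le zero_le_one]
    exact h
  have h2 := this.neg
  convert h2 using 1
  funext x
  simp



/-- The dilogarithm `Li₂(z)`, defined for `z ∉ (−∞,0] ∪ [1,∞)` as the integral of
`−log(1−t)/t` along the segment from `0` to `z`. -/
def Li2 (z : ℂ) : ℂ := -∫ u in (0:ℝ)..1, Complex.log (1 - (u : ℂ) * z) / (u : ℂ)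

/-- The integral of `log(1−t)/t + log t/(1−t)` along the segment from `0` to `z`
equals `−2·Li₂(z) − log z · log(1−z)`; equivalently, the Rogers dilogarithm
`ℛ(z) = −(1/2)∫₀ᶻ (log(1−t)/t + log t/(1−t)) dt` equals
`Li₂(z) + (1/2)·log z·log(1−z)`. -/
theorem rogers_dilogarithm_formula (z : ℂ)
    (hz : z ∉ Complex.ofReal '' (Set.Iic 0 ∪ Set.Ici 1)) :
    (∫ u in (0:ℝ)..1,
        (Complex.log (1 - (u : ℂ) * z) / (u : ℂ) +
          z * Complex.log ((u : ℂ) * z) / (1 - (u : ℂ) * z))) =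
      -2 * Li2 z - Complex.log z * Complex.log (1 - z) ∧
    -(1 / 2 : ℂ) * (∫ u in (0:ℝ)..1,
        (Complex.log (1 - (u : ℂ) * z) / (u : ℂ) +
          z * Complex.log ((u : ℂ) * z) / (1 - (u : ℂ) * z))) =
      Li2 z + (1 / 2 : ℂ) * Complex.log z * Complex.log (1 - z) := by
  have hz' : ∀ x : ℝ, (x : ℂ) = z → 0 < x ∧ x < 1 := by
    intro x hx
    by_contra h
    push_neg at h
    apply hz
    refine ⟨x, ?_, hx⟩
    rcases le_or_gt x 0 with h0 | h0
    · exact Or.inl h0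
    · exact Or.inr (h h0)
  have hz0 : z ≠ 0 := by
    intro h
    exact lt_irrefl 0 (hz' 0 (by simp [h])).1
  have hslit2 : ∀ u : ℝ, 0 < u → (u : ℂ) * z ∈ Complex.slitPlane := by
    intro u hu
    rw [Complex.mem_slitPlane_iff]
    rcases eq_or_ne z.im 0 with him | him
    · have hzre := hz' z.re (by exact (Complex.ext rfl (by simp [him])))
      left
      simp only [Complex.mul_re, Complex.ofReal_re, Complex.ofReal_im, him]
      nlinarith [hzre.1]
    · right
      simp only [Complex.mul_im, Complex.ofReal_re, Complex.ofReal_im]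
      simp [him, ne_of_gt hu]
  have hslit1 : ∀ u : ℝ, u ∈ Icc (0:ℝ) 1 → 1 - (u : ℂ) * z ∈ Complex.slitPlane := by
    intro u hu
    rw [Complex.mem_slitPlane_iff]
    rcases eq_or_ne z.im 0 with him | him
    · have hzre := hz' z.re (by exact (Complex.ext rfl (by simp [him])))
      left
      simp only [Complex.sub_re, Complex.one_re, Complex.mul_re, Complex.ofReal_re,
        Complex.ofReal_im, him]
      nlinarith [hzre.1, hzre.2, hu.1, hu.2]
    · rcases eq_or_lt_of_le hu.1 with h0 | h0
      · left; simp [← h0]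
      · right
        simp only [Complex.sub_im, Complex.one_im, Complex.mul_im, Complex.ofReal_re,
          Complex.ofReal_im]
        simp [him, ne_of_gt h0]
  set f1 : ℝ → ℂ := fun u => Complex.log (1 - (u : ℂ) * z) / (u : ℂ) with hf1
  set f2 : ℝ → ℂ := fun u => z * Complex.log ((u : ℂ) * z) / (1 - (u : ℂ) * z) with hf2
  -- nonvanishing of 1 - u z on Icc
  have hne1 : ∀ u : ℝ, u ∈ Icc (0:ℝ) 1 → 1 - (u : ℂ) * z ≠ 0 :=
    fun u hu => Complex.slitPlane_ne_zero (hslit1 u hu)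
  -- tendsto of f1 at 0+
  have hT1 : Tendsto f1 (𝓝[>] (0:ℝ)) (𝓝 (-z)) := by
    have hd : HasDerivAt (fun u : ℝ => Complex.log (1 - (u : ℂ) * z)) (-z) 0 := by
      have hin : HasDerivAt (fun w : ℂ => 1 - w * z) (-z) 0 := by
        simpa using ((hasDerivAt_id (0 : ℂ)).mul_const z).const_sub 1
      have hlog : HasDerivAt Complex.log 1 (1 - (0 : ℂ) * z) := by
        have : ((1 : ℂ) - 0 * z) = 1 := by ring
        rw [this]
        simpa using Complex.hasDerivAt_log (by simp [Complex.slitPlane] : (1:ℂ) ∈ Complex.slitPlane)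
      have := (hlog.comp (0 : ℂ) hin).comp_ofReal
      simpa using this
    have hs := hasDerivAt_iff_tendsto_slope.mp hd
    have heq : ∀ u : ℝ, slope (fun u : ℝ => Complex.log (1 - (u : ℂ) * z)) 0 u = f1 u := by
      intro u
      simp only [slope_def_module, hf1]
      rcases eq_or_ne u 0 with rfl | hu
      · simp
      · simp [Complex.real_smul, Complex.ofReal_inv, div_eq_inv_mul]
    exact (hs.mono_left (nhdsWithin_mono 0 fun x hx => ne_of_gt hx)).congr heq
  -- tendsto of u * log(uz) at 0+
  have hT2 : Tendsto (fun u : ℝ => (u : ℂ) * Complex.log ((u : ℂ) * z)) (𝓝[>] (0:ℝ)) (𝓝 0) := by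
    have hre : Tendsto (fun u : ℝ => Real.log u * u) (𝓝[>] (0:ℝ)) (𝓝 0) := by
      simpa using tendsto_log_mul_rpow_nhdsGT_zero zero_lt_one
    have h1 : Tendsto (fun u : ℝ => ((Real.log u * u : ℝ) : ℂ) + (u : ℂ) * Complex.log z)
        (𝓝[>] (0:ℝ)) (𝓝 0) := by
      have ha : Tendsto (fun u : ℝ => ((Real.log u * u : ℝ) : ℂ)) (𝓝[>] (0:ℝ)) (𝓝 0) := by
        have := (Complex.continuous_ofReal.tendsto 0).comp hre
        simpa [Function.comp_def] using this
      have hb : Tendsto (fun u : ℝ => (u : ℂ) * Complex.log z) (𝓝[>] (0:ℝ)) (𝓝 0) := by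
        have : Tendsto (fun u : ℝ => (u : ℂ)) (𝓝[>] (0:ℝ)) (𝓝 0) := by
          have h0 : Tendsto (fun u : ℝ => (u : ℂ)) (𝓝 (0:ℝ)) (𝓝 0) := by
            simpa using Complex.continuous_ofReal.tendsto 0
          exact h0.mono_left nhdsWithin_le_nhds
        simpa using this.mul_const (Complex.log z)
      simpa using ha.add hb
    refine h1.congr' ?_
    filter_upwards [self_mem_nhdsWithin] with u (hu : 0 < u)
    rw [Complex.log_ofReal_mul hu hz0]
    push_cast
    ring
  set F : ℝ → ℂ := fun u => Complex.log ((u : ℂ) * z) * Complex.log (1 - (u : ℂ) * z) with hF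
  have hFcont : ContinuousOn F (Icc 0 1) := by
    intro u hu
    rcases eq_or_lt_of_le hu.1 with h0 | h0
    · subst h0
      rw [← continuousWithinAt_diff_self]
      have hF0 : F 0 = 0 := by simp [hF]
      rw [ContinuousWithinAt, hF0]
      have hmono : 𝓝[Icc (0:ℝ) 1 \ {0}] 0 ≤ 𝓝[>] (0:ℝ) :=
        nhdsWithin_mono _ (fun x hx => lt_of_le_of_ne hx.1.1 (Ne.symm hx.2))
      have hT : Tendsto F (𝓝[>] (0:ℝ)) (𝓝 0) := by
        have hprod := hT2.mul hT1
        rw [zero_mul] at hprod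
        refine Tendsto.congr' ?_ hprod
        filter_upwards [self_mem_nhdsWithin] with u (hu : 0 < u)
        have hu0 : (u : ℂ) ≠ 0 := by exact_mod_cast ne_of_gt hu
        simp only [hF, hf1]
        field_simp
      exact hT.mono_left hmono
    · have hc1 : ContinuousAt (fun u : ℝ => (u : ℂ) * z) u := by fun_prop
      have hc2 : ContinuousAt (fun u : ℝ => 1 - (u : ℂ) * z) u := by fun_prop
      have h1 : ContinuousAt (fun u : ℝ => Complex.log ((u : ℂ) * z)) u :=
        hc1.clog (hslit2 u h0)
      have h2 : ContinuousAt (fun u : ℝ => Complex.log (1 - (u : ℂ) * z)) u :=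
        hc2.clog (hslit1 u hu)
      exact (h1.mul h2).continuousWithinAt
  have hFderiv : ∀ u ∈ Ioo (0:ℝ) 1, HasDerivAt F (f1 u - f2 u) u := by
    intro u hu
    have hu0 : (u : ℂ) ≠ 0 := by exact_mod_cast ne_of_gt hu.1
    have hicc : u ∈ Icc (0:ℝ) 1 := ⟨hu.1.le, hu.2.le⟩
    have h1 : HasDerivAt (fun v : ℝ => Complex.log ((v : ℂ) * z)) (((u : ℂ) * z)⁻¹ * z) u := by
      have hin : HasDerivAt (fun w : ℂ => w * z) z ((u : ℝ) : ℂ) := by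
        simpa using (hasDerivAt_id ((u : ℝ) : ℂ)).mul_const z
      have := ((Complex.hasDerivAt_log (hslit2 u hu.1)).comp ((u : ℝ) : ℂ) hin).comp_ofReal
      simpa using this
    have h2 : HasDerivAt (fun v : ℝ => Complex.log (1 - (v : ℂ) * z))
        ((1 - (u : ℂ) * z)⁻¹ * (-z)) u := by
      have hin : HasDerivAt (fun w : ℂ => 1 - w * z) (-z) ((u : ℝ) : ℂ) := by
        simpa using ((hasDerivAt_id ((u : ℝ) : ℂ)).mul_const z).const_sub 1
      have := ((Complex.hasDerivAt_log (hslit1 u hicc)).comp ((u : ℝ) : ℂ) hin).comp_ofReal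
      simpa using this
    have hprod := h1.mul h2
    refine hprod.congr_deriv ?_
    have hz1 : (1 : ℂ) - (u : ℂ) * z ≠ 0 := hne1 u hicc
    simp only [hf1, hf2]
    field_simp
    ring
  -- integrability of f1
  have I1 : IntervalIntegrable f1 volume 0 1 := by
    set g1 : ℝ → ℂ := fun u => if u = 0 then -z else f1 u with hg1
    have hg1cont : ContinuousOn g1 (Icc 0 1) := by
      intro u hu
      rcases eq_or_lt_of_le hu.1 with h0 | h0
      · subst h0
        rw [← continuousWithinAt_diff_self, ContinuousWithinAt]
        have hg10 : g1 0 = -z := by simp [hg1]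
        rw [hg10]
        have hmono : 𝓝[Icc (0:ℝ) 1 \ {0}] 0 ≤ 𝓝[>] (0:ℝ) :=
          nhdsWithin_mono _ (fun x hx => lt_of_le_of_ne hx.1.1 (Ne.symm hx.2))
        refine Tendsto.mono_left ?_ hmono
        refine hT1.congr' ?_
        filter_upwards [self_mem_nhdsWithin] with v (hv : 0 < v)
        simp [hg1, ne_of_gt hv]
      · have hu0 : (u : ℂ) ≠ 0 := by exact_mod_cast ne_of_gt h0
        have hceq : ∀ᶠ v in 𝓝 u, f1 v = g1 v := by
          filter_upwards [eventually_ne_nhds (ne_of_gt h0)] with v hv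
          simp [hg1, hv]
        have hc2 : ContinuousAt (fun v : ℝ => 1 - (v : ℂ) * z) u := by fun_prop
        have hcf1 : ContinuousAt f1 u := by
          exact (hc2.clog (hslit1 u hu)).div (by fun_prop) hu0
        exact (hcf1.congr hceq).continuousWithinAt
    have hgint : IntervalIntegrable g1 volume 0 1 := by
      apply ContinuousOn.intervalIntegrable
      rwa [uIcc_of_le zero_le_one]
    refine hgint.congr ?_
    intro x hx
    rw [Set.uIoc_of_le zero_le_one] at hx
    simp [hg1, ne_of_gt hx.1]
  -- integrability of f2
  have hcontdiv : ContinuousOn (fun u : ℝ => z / (1 - (u : ℂ) * z)) (uIcc (0:ℝ) 1) := by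
    rw [uIcc_of_le zero_le_one]
    exact continuousOn_const.div (by fun_prop) (fun u hu => hne1 u hu)
  have Ilog : IntervalIntegrable (fun u : ℝ => (Real.log u : ℂ)) volume 0 1 := by
    have h := intervalIntegrable_reallog01
    rw [intervalIntegrable_iff] at h ⊢
    exact h.ofReal
  have Ih2 : IntervalIntegrable (fun u : ℝ =>
      (Real.log u : ℂ) * (z / (1 - (u : ℂ) * z)) +
        Complex.log z * (z / (1 - (u : ℂ) * z))) volume 0 1 := by
    refine (Ilog.mul_continuousOn hcontdiv).add ?_
    apply ContinuousOn.intervalIntegrable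
    exact continuousOn_const.mul hcontdiv
  have I2 : IntervalIntegrable f2 volume 0 1 := by
    refine Ih2.congr ?_
    intro u hu
    rw [Set.uIoc_of_le zero_le_one] at hu
    have hz1 : (1 : ℂ) - (u : ℂ) * z ≠ 0 := hne1 u ⟨hu.1.le, hu.2⟩
    simp only [hf2]
    rw [Complex.log_ofReal_mul hu.1 hz0]
    field_simp
  -- fundamental theorem of calculus
  have key : (∫ u in (0:ℝ)..1, (f1 u - f2 u)) = Complex.log z * Complex.log (1 - z) := by
    have hftc := intervalIntegral.integral_eq_sub_of_hasDeriv_right_of_le zero_le_one hFcont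
      (fun x hx => (hFderiv x hx).hasDerivWithinAt) (I1.sub I2)
    rw [hftc]
    simp [hF]
  have hadd : (∫ u in (0:ℝ)..1, (f1 u + f2 u)) =
      (∫ u in (0:ℝ)..1, f1 u) + ∫ u in (0:ℝ)..1, f2 u := intervalIntegral.integral_add I1 I2
  have hsub : (∫ u in (0:ℝ)..1, (f1 u - f2 u)) =
      (∫ u in (0:ℝ)..1, f1 u) - ∫ u in (0:ℝ)..1, f2 u := intervalIntegral.integral_sub I1 I2
  have hLi : Li2 z = -∫ u in (0:ℝ)..1, f1 u := by rw [Li2]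
  have hmain : (∫ u in (0:ℝ)..1, (f1 u + f2 u)) =
      -2 * Li2 z - Complex.log z * Complex.log (1 - z) := by
    rw [hadd, hLi]
    rw [hsub] at key
    linear_combination -key
  constructor
  · exact hmain
  · have h2 : (∫ u in (0:ℝ)..1, (f1 u + f2 u)) =
        -2 * Li2 z - Complex.log z * Complex.log (1 - z) := hmain
    show -(1 / 2 : ℂ) * (∫ u in (0:ℝ)..1, (f1 u + f2 u)) = _
    rw [h2]
    ring

end
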